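/- Let K be a field of characteristic different from 2, k ≥ 1, and let A_1, ..., A_k be antisymmetric square matrices over K (A_iᵀ = −A_i) with A_i of size n_i × n_i (each n_i ≥ 1), and set r_i = rank(A_i). Then there exists an antisymmetric completion M of the block diagonal partial matrix diag(A_1, ..., A_k) with rank(M) = max{r_i : i = 1, ..., k}, and every antisymmetric completion has rank at least max{r_i : i = 1, ..., k}; i.e., the minimum of the ranks of all antisymmetric completions of diag(A_1, ..., A_k) equals max{r_i : i = 1, ..., k}. -/

import Mathlib

open Matrix


open Matrix Module Submodule

namespace Stmt11Aux

variable {K : Type*} [Field K]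

/-- The antisymmetric rank-≤2 matrix built from a pair of vectors. -/
def pairMat {m : Type*} (u v : m → K) : Matrix m m K :=
  Matrix.of fun x y => u x * v y - v x * u y

lemma pairMat_transpose {m : Type*} (u v : m → K) : (pairMat u v)ᵀ = -pairMat u v := by
  ext x y
  simp only [pairMat, Matrix.transpose_apply, Matrix.of_apply, Matrix.neg_apply]
  ring

lemma pairMat_smul {m : Type*} (c : K) (u v : m → K) :
    pairMat (c • u) v = c • pairMat u v := by
  ext x y
  simp only [pairMat, Matrix.of_apply, Pi.smul_apply, Matrix.smul_apply, smul_eq_mul]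
  ring

variable {m : Type*} [Fintype m]

lemma pairMat_mulVec [DecidableEq m] (u v x : m → K) :
    pairMat u v *ᵥ x = (v ⬝ᵥ x) • u - (u ⬝ᵥ x) • v := by
  ext i
  simp only [pairMat, Matrix.mulVec, dotProduct, Matrix.of_apply, Pi.sub_apply,
    Pi.smul_apply, smul_eq_mul, Finset.mul_sum, sub_mul, Finset.sum_sub_distrib,
    Finset.sum_mul]
  congr 1 <;> exact Finset.sum_congr rfl fun j _ => by ring

lemma eq_zero_of_rank_eq_zero {n : Type*} [Fintype n] [DecidableEq n]
    {A : Matrix m n K} (h : A.rank = 0) : A = 0 := by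
  have hb : LinearMap.range A.mulVecLin = ⊥ := Submodule.finrank_eq_zero.mp h
  ext i j
  have hx : A *ᵥ Pi.single j 1 = 0 := by
    have hmem : A.mulVecLin (Pi.single j 1) ∈ (⊥ : Submodule K (m → K)) :=
      hb ▸ LinearMap.mem_range_self _ _
    simpa [Matrix.mulVecLin_apply] using hmem
  have := congrFun hx i
  simpa using this

lemma rank_add_le (A B : Matrix m m K) : (A + B).rank ≤ A.rank + B.rank := by
  classical
  have h : LinearMap.range (A + B).mulVecLin ≤
      LinearMap.range A.mulVecLin ⊔ LinearMap.range B.mulVecLin := by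
    rintro x ⟨y, rfl⟩
    rw [Matrix.mulVecLin_add]
    exact Submodule.mem_sup.2 ⟨_, ⟨y, rfl⟩, _, ⟨y, rfl⟩, rfl⟩
  refine (Submodule.finrank_mono h).trans ?_
  exact Submodule.finrank_add_le_finrank_add_finrank _ _

lemma rank_neg (A : Matrix m m K) : (-A).rank = A.rank := by
  have : (-A).mulVecLin = -A.mulVecLin := by
    ext x
    simp [Matrix.neg_mulVec]
  rw [Matrix.rank, this, LinearMap.range_neg, Matrix.rank]

lemma rank_vecMulVec_le (u v : m → K) : (Matrix.vecMulVec u v).rank ≤ 1 := by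
  have h : LinearMap.range (Matrix.vecMulVec u v).mulVecLin ≤ Submodule.span K {u} := by
    rintro x ⟨y, rfl⟩
    have : Matrix.vecMulVec u v *ᵥ y = (v ⬝ᵥ y) • u := by
      ext i
      simp only [Matrix.vecMulVec_apply, Matrix.mulVec, dotProduct, Pi.smul_apply,
        smul_eq_mul, Finset.mul_sum, Finset.sum_mul]
      exact Finset.sum_congr rfl fun j _ => by ring
    simp only [Matrix.mulVecLin_apply, this]
    exact Submodule.smul_mem _ _ (Submodule.mem_span_singleton_self u)
  refine (Submodule.finrank_mono h).trans ?_
  by_cases hu : u = 0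
  · rw [hu, Submodule.span_zero_singleton]
    simp
  · rw [finrank_span_singleton hu]

lemma rank_pairMat_le (u v : m → K) : (pairMat u v).rank ≤ 2 := by
  have h : pairMat u v = Matrix.vecMulVec u v + -(Matrix.vecMulVec v u) := by
    ext x y
    simp only [pairMat, Matrix.vecMulVec_apply, Matrix.add_apply, Matrix.neg_apply,
      Matrix.of_apply]
    ring
  calc (pairMat u v).rank ≤ (Matrix.vecMulVec u v).rank + (-(Matrix.vecMulVec v u)).rank := by
        rw [h]; exact rank_add_le _ _
    _ ≤ 1 + 1 := by
        refine add_le_add (rank_vecMulVec_le _ _) ?_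
        rw [rank_neg]; exact rank_vecMulVec_le _ _

lemma rank_sum_le {ι : Type*} (s : Finset ι) (f : ι → Matrix m m K) :
    (∑ i ∈ s, f i).rank ≤ ∑ i ∈ s, (f i).rank := by
  classical
  induction s using Finset.induction with
  | empty => simp
  | insert _ _ hni ih =>
    rw [Finset.sum_insert hni, Finset.sum_insert hni]
    exact (rank_add_le _ _).trans (add_le_add le_rfl ih)

set_option maxHeartbeats 1000000 in
lemma rank_submatrix_le' {m' n' l l' : Type*} [Fintype m'] [Fintype n'] [Fintype l] [Fintype l']
    [DecidableEq m'] [DecidableEq n']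
    (A : Matrix m' n' K) (f : l → m') (g : l' → n') :
    (A.submatrix f g).rank ≤ A.rank := by
  classical
  have h : A.submatrix f g =
      (Matrix.of fun (i : l) (x : m') => if f i = x then (1 : K) else 0) * A *
      (Matrix.of fun (y : n') (j : l') => if g j = y then (1 : K) else 0) := by
    ext i j
    simp only [Matrix.submatrix_apply, Matrix.mul_apply, Matrix.of_apply, ite_mul, one_mul,
      zero_mul, mul_ite, mul_one, mul_zero, Finset.sum_ite_eq, Finset.mem_univ, if_true]
  rw [h]
  exact (Matrix.rank_mul_le_left _ _).trans (Matrix.rank_mul_le_right _ _)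

variable [DecidableEq m]

lemma diag_zero (hchar : ringChar K ≠ 2) {A : Matrix m m K} (hA : Aᵀ = -A) (x : m) :
    A x x = 0 := by
  have h : A x x = -A x x := by
    have := congrFun (congrFun hA x) x
    simpa using this
  have h2 : (2 : K) * A x x = 0 := by linear_combination h
  exact (mul_eq_zero.mp h2).resolve_left (Ring.two_ne_zero hchar)

lemma rank_drop (hchar : ringChar K ≠ 2) {A : Matrix m m K} (hA : Aᵀ = -A)
    {p q : m} (hpq : A p q ≠ 0) :
    ∃ B : Matrix m m K, Bᵀ = -B ∧ B.rank + 2 = A.rank ∧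
      A = B + (A p q)⁻¹ • pairMat (fun x => A x p) (fun x => A x q) := by
  classical
  set c : K := A p q with hc
  set a : m → K := fun x => A x p with ha
  set b : m → K := fun x => A x q with hb
  set B : Matrix m m K := A - c⁻¹ • pairMat a b with hBdef
  have hApp : A p p = 0 := diag_zero hchar hA p
  have hAqq : A q q = 0 := diag_zero hchar hA q
  have hAqp : A q p = -c := by
    have := congrFun (congrFun hA p) q
    simpa using this
  have hBskew : Bᵀ = -B := by
    rw [hBdef, Matrix.transpose_sub, Matrix.transpose_smul, pairMat_transpose, hA]
    module
  -- columns p and q of B vanish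
  have hBp : ∀ x, B x p = 0 := by
    intro x
    simp only [hBdef, pairMat, Matrix.sub_apply, Matrix.smul_apply, Matrix.of_apply, smul_eq_mul]
    show a x - c⁻¹ * (a x * b p - b x * a p) = 0
    have hap : a p = 0 := hApp
    have hbp : b p = c := rfl
    rw [hap, hbp]
    field_simp
    ring
  have hBq : ∀ x, B x q = 0 := by
    intro x
    simp only [hBdef, pairMat, Matrix.sub_apply, Matrix.smul_apply, Matrix.of_apply, smul_eq_mul]
    show b x - c⁻¹ * (a x * b q - b x * a q) = 0
    have haq : a q = -c := hAqp
    have hbq : b q = 0 := hAqq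
    rw [haq, hbq]
    field_simp
    ring
  -- rows p and q of B vanish
  have hBrp : ∀ y, B p y = 0 := by
    intro y
    have := congrFun (congrFun hBskew y) p
    simp only [Matrix.transpose_apply, Matrix.neg_apply] at this
    rw [hBp y, neg_zero] at this
    exact this
  have hBrq : ∀ y, B q y = 0 := by
    intro y
    have := congrFun (congrFun hBskew y) q
    simp only [Matrix.transpose_apply, Matrix.neg_apply] at this
    rw [hBq y, neg_zero] at this
    exact this
  refine ⟨B, hBskew, ?_, by rw [hBdef]; abel⟩
  -- rank computation
  set W : Submodule K (m → K) := LinearMap.range B.mulVecLin with hW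
  set WA : Submodule K (m → K) := LinearMap.range A.mulVecLin with hWA
  set S : Submodule K (m → K) := Submodule.span K {a, b} with hS
  have ha_mem : a ∈ WA := by
    refine ⟨Pi.single p 1, ?_⟩
    rw [Matrix.mulVecLin_apply, Matrix.mulVec_single_one]
    rfl
  have hb_mem : b ∈ WA := by
    refine ⟨Pi.single q 1, ?_⟩
    rw [Matrix.mulVecLin_apply, Matrix.mulVec_single_one]
    rfl
  have hBv : ∀ x : m → K, B *ᵥ x = A *ᵥ x - c⁻¹ • ((b ⬝ᵥ x) • a - (a ⬝ᵥ x) • b) := by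
    intro x
    rw [hBdef, Matrix.sub_mulVec, Matrix.smul_mulVec, pairMat_mulVec]
  have hWle : W ≤ WA := by
    rintro _ ⟨x, rfl⟩
    rw [Matrix.mulVecLin_apply, hBv]
    exact Submodule.sub_mem _ ⟨x, rfl⟩
      (Submodule.smul_mem _ _ (Submodule.sub_mem _ (Submodule.smul_mem _ _ ha_mem)
        (Submodule.smul_mem _ _ hb_mem)))
  have hSle : S ≤ WA := by
    rw [hS, Submodule.span_le]
    rintro z hz
    rcases hz with rfl | hz
    · exact ha_mem
    · rcases hz with rfl
      exact hb_mem
  have hsup : W ⊔ S = WA := by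
    refine le_antisymm (sup_le hWle hSle) ?_
    rintro _ ⟨x, rfl⟩
    have : A *ᵥ x = B *ᵥ x + c⁻¹ • ((b ⬝ᵥ x) • a - (a ⬝ᵥ x) • b) := by
      rw [hBv]; abel
    rw [Matrix.mulVecLin_apply, this]
    refine Submodule.add_mem _ (Submodule.mem_sup_left ⟨x, rfl⟩) (Submodule.mem_sup_right ?_)
    refine Submodule.smul_mem _ _ (Submodule.sub_mem _ (Submodule.smul_mem _ _ ?_)
      (Submodule.smul_mem _ _ ?_))
    · exact Submodule.subset_span (by left; rfl)
    · exact Submodule.subset_span (by right; rfl)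
  have hWcoord : ∀ w ∈ W, w p = 0 ∧ w q = 0 := by
    rintro _ ⟨x, rfl⟩
    constructor
    · rw [Matrix.mulVecLin_apply]
      show (B *ᵥ x) p = 0
      simp [Matrix.mulVec, dotProduct, hBrp]
    · rw [Matrix.mulVecLin_apply]
      show (B *ᵥ x) q = 0
      simp [Matrix.mulVec, dotProduct, hBrq]
  have hap : a p = 0 := hApp
  have haq : a q = -c := hAqp
  have hbp : b p = c := rfl
  have hbq : b q = 0 := hAqq
  have hdis : W ⊓ S = ⊥ := by
    rw [eq_bot_iff]
    rintro w hw
    rw [Submodule.mem_inf] at hw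
    obtain ⟨hw1, hw2⟩ := hw
    obtain ⟨α, β, hαβ⟩ := Submodule.mem_span_pair.mp hw2
    obtain ⟨hp0, hq0⟩ := hWcoord w hw1
    have h1 : β * c = 0 := by
      have := congrFun hαβ p
      simp only [Pi.add_apply, Pi.smul_apply, smul_eq_mul] at this
      rw [hap, hbp] at this
      rw [← this] at hp0
      linear_combination hp0
    have h2 : α * c = 0 := by
      have := congrFun hαβ q
      simp only [Pi.add_apply, Pi.smul_apply, smul_eq_mul] at this
      rw [haq, hbq] at this
      rw [← this] at hq0
      linear_combination -hq0
    have hβ : β = 0 := by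
      rcases mul_eq_zero.mp h1 with h | h
      · exact h
      · exact absurd h hpq
    have hα : α = 0 := by
      rcases mul_eq_zero.mp h2 with h | h
      · exact h
      · exact absurd h hpq
    have : w = 0 := by rw [← hαβ, hα, hβ]; simp
    simp [this]
  have hindep : LinearIndependent K ![a, b] := by
    rw [LinearIndependent.pair_iff]
    intro s t hst
    have hsp := congrFun hst p
    have hsq := congrFun hst q
    simp only [Pi.add_apply, Pi.smul_apply, smul_eq_mul, Pi.zero_apply] at hsp hsq
    rw [hap, hbp] at hsp
    rw [haq, hbq] at hsq
    constructor
    · have hz : s * -c = 0 := by linear_combination hsq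
      rcases mul_eq_zero.mp hz with h | h
      · exact h
      · exact absurd (neg_eq_zero.mp h) hpq
    · have hz : t * c = 0 := by linear_combination hsp
      rcases mul_eq_zero.mp hz with h | h
      · exact h
      · exact absurd h hpq
  have hfS : finrank K S = 2 := by
    have hrange : Set.range ![a, b] = {a, b} := by
      rw [Matrix.range_cons, Matrix.range_cons_empty]
      ext z
      simp only [Set.mem_insert_iff, Set.union_singleton, Set.mem_singleton_iff]
      tauto
    have := finrank_span_eq_card hindep
    rw [hrange] at this
    rw [hS, this, Fintype.card_fin]
  have key := Submodule.finrank_sup_add_finrank_inf_eq W S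
  rw [hsup, hdis, finrank_bot, add_zero, hfS] at key
  show finrank K W + 2 = finrank K WA
  omega

lemma decomp (hchar : ringChar K ≠ 2) :
    ∀ (s : ℕ) (A : Matrix m m K), Aᵀ = -A → A.rank ≤ 2 * s →
      ∃ u v : Fin s → m → K, A = ∑ i, pairMat (u i) (v i) := by
  intro s
  induction s with
  | zero =>
    intro A hA hr
    have h0 : A = 0 := eq_zero_of_rank_eq_zero (Nat.le_zero.mp (by simpa using hr))
    exact ⟨0, 0, by simp [h0]⟩
  | succ s ih =>
    intro A hA hr
    by_cases h0 : A = 0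
    · refine ⟨0, 0, ?_⟩
      have : pairMat (0 : m → K) 0 = 0 := by ext x y; simp [pairMat]
      simp [h0, this]
    · obtain ⟨p, q, hpq⟩ : ∃ p q, A p q ≠ 0 := by
        by_contra h
        push_neg at h
        exact h0 (by ext x y; simp [h])
      obtain ⟨B, hBskew, hBrank, hAB⟩ := rank_drop hchar hA hpq
      have hBr : B.rank ≤ 2 * s := by omega
      obtain ⟨u, v, huv⟩ := ih B hBskew hBr
      refine ⟨Fin.cons ((A p q)⁻¹ • fun x => A x p) u, Fin.cons (fun x => A x q) v, ?_⟩
      rw [Fin.sum_univ_succ]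
      simp only [Fin.cons_zero, Fin.cons_succ]
      rw [pairMat_smul, ← huv]
      conv_lhs => rw [hAB]
      abel

lemma even_rank (hchar : ringChar K ≠ 2) :
    ∀ (r : ℕ) (A : Matrix m m K), Aᵀ = -A → A.rank = r → Even r := by
  intro r
  induction r using Nat.strong_induction_on with
  | _ r ih =>
    intro A hA hr
    by_cases h0 : A = 0
    · rw [h0, Matrix.rank_zero] at hr
      rw [← hr]
      exact Even.zero
    · obtain ⟨p, q, hpq⟩ : ∃ p q, A p q ≠ 0 := by
        by_contra h
        push_neg at h
        exact h0 (by ext x y; simp [h])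
      obtain ⟨B, hBskew, hBrank, -⟩ := rank_drop hchar hA hpq
      have hlt : B.rank < r := by omega
      have hBeven := ih B.rank hlt B hBskew rfl
      obtain ⟨t, ht⟩ := hBeven
      exact ⟨t + 1, by omega⟩

end Stmt11Aux


/-- `M` is a completion of the block diagonal partial matrix
`diag (A 0, ..., A (k-1))`: its `(i,i)` diagonal block equals `A i` for every `i`. -/
def IsCompletion {K : Type*} [Field K] {k : ℕ} {n : Fin k → ℕ}
    (A : ∀ i : Fin k, Matrix (Fin (n i)) (Fin (n i)) K)
    (M : Matrix (Σ i : Fin k, Fin (n i)) (Σ i : Fin k, Fin (n i)) K) : Prop :=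
  ∀ (i : Fin k) (x y : Fin (n i)), M ⟨i, x⟩ ⟨i, y⟩ = A i x y

/-- The minimum of the ranks of the antisymmetric completions of
`diag (A 0, ..., A (k-1))` is `max {rank (A i)}`. -/
theorem stmt_11 {K : Type*} [Field K] (hchar : ringChar K ≠ 2)
    {k : ℕ} (hk : 0 < k) {n : Fin k → ℕ} (hn : ∀ i, 0 < n i)
    (A : ∀ i : Fin k, Matrix (Fin (n i)) (Fin (n i)) K)
    (hanti : ∀ i, (A i)ᵀ = -(A i)) :
    IsLeast {l : ℕ | ∃ M, IsCompletion A M ∧ Mᵀ = -M ∧ M.rank = l}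
      (Finset.univ.sup (fun i : Fin k => (A i).rank)) := by
  classical
  constructor
  · -- membership: construct an antisymmetric completion of rank `r`
    have hne : (Finset.univ : Finset (Fin k)).Nonempty := ⟨⟨0, hk⟩, Finset.mem_univ _⟩
    obtain ⟨i0, -, hi0⟩ := Finset.exists_mem_eq_sup Finset.univ hne
      (fun i : Fin k => (A i).rank)
    set r := Finset.univ.sup (fun i : Fin k => (A i).rank) with hrdef
    have hreven : Even r := Stmt11Aux.even_rank hchar r (A i0) (hanti i0) hi0.symm
    obtain ⟨s, hs⟩ := hreven
    have hle : ∀ i, (A i).rank ≤ 2 * s := by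
      intro i
      have h2 : (A i).rank ≤ r :=
        Finset.le_sup (f := fun i : Fin k => (A i).rank) (Finset.mem_univ i)
      omega
    choose u v huv using fun i => Stmt11Aux.decomp hchar s (A i) (hanti i) (hle i)
    set M : Matrix (Σ i : Fin k, Fin (n i)) (Σ i : Fin k, Fin (n i)) K :=
      ∑ a : Fin s, Stmt11Aux.pairMat (fun z => u z.1 a z.2) (fun z => v z.1 a z.2) with hM
    have hcomp : IsCompletion A M := by
      intro i x y
      have h1 : A i x y = (∑ a : Fin s, Stmt11Aux.pairMat (u i a) (v i a)) x y := by
        rw [← huv i]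
      rw [hM, Matrix.sum_apply, h1, Matrix.sum_apply]
      exact Finset.sum_congr rfl fun a _ => rfl
    refine ⟨M, hcomp, ?_, ?_⟩
    · rw [hM, Matrix.transpose_sum]
      rw [← Finset.sum_neg_distrib]
      exact Finset.sum_congr rfl fun a _ => Stmt11Aux.pairMat_transpose _ _
    · refine le_antisymm ?_ ?_
      · calc M.rank ≤ ∑ a : Fin s,
              (Stmt11Aux.pairMat (fun z : Σ i, Fin (n i) => u z.1 a z.2)
                (fun z : Σ i, Fin (n i) => v z.1 a z.2)).rank := by
              rw [hM]; exact Stmt11Aux.rank_sum_le _ _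
          _ ≤ ∑ _a : Fin s, 2 :=
              Finset.sum_le_sum fun a _ => Stmt11Aux.rank_pairMat_le _ _
          _ = 2 * s := by simp [Finset.sum_const, mul_comm]
          _ = r := by omega
      · rw [hi0]
        have hsub : A i0 = M.submatrix (Sigma.mk i0) (Sigma.mk i0) := by
          ext x y
          exact (hcomp i0 x y).symm
        rw [hsub]
        exact Stmt11Aux.rank_submatrix_le' M (Sigma.mk i0) (Sigma.mk i0)
  · rintro l ⟨M, hcomp, -, rfl⟩
    refine Finset.sup_le fun i _ => ?_
    have hsub : A i = M.submatrix (Sigma.mk i) (Sigma.mk i) := by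
      ext x y
      exact (hcomp i x y).symm
    rw [hsub]
    exact Stmt11Aux.rank_submatrix_le' M (Sigma.mk i) (Sigma.mk i)
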